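/- With the filtration F_i O(n) := B_d^{(i+2)}(n) of the operad of overlapping discs, the operadic composition restricts to maps ∘_i : F_{k₁}O(n₁) × F_{k₂}O(n₂) → F_{k₁+k₂}O(n₁+n₂−1), i.e. the index of the filtration is additive under composition. -/

import Mathlib

private lemma ball_sub_unit {d : ℕ} (hd : 1 ≤ d) (c : EuclideanSpace ℝ (Fin d)) (r : ℝ)
    (hr : 0 < r) (h : Metric.ball c r ⊆ Metric.ball 0 1) : ‖c‖ + r ≤ 1 := by
  have hcb : Metric.closedBall c r ⊆ Metric.closedBall (0 : EuclideanSpace ℝ (Fin d)) 1 := by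
    rw [← closure_ball c (ne_of_gt hr), ← closure_ball (0 : EuclideanSpace ℝ (Fin d)) one_ne_zero]
    exact closure_mono h
  by_cases h0 : c = 0
  · subst h0
    set e : EuclideanSpace ℝ (Fin d) := EuclideanSpace.single (⟨0, hd⟩ : Fin d) (1 : ℝ) with he
    have hne : ‖e‖ = 1 := by simp [he, EuclideanSpace.norm_single]
    have hmem : r • e ∈ Metric.closedBall (0 : EuclideanSpace ℝ (Fin d)) r := by
      simp [norm_smul, hne, abs_of_pos hr]
    have := hcb hmem
    simp only [Metric.mem_closedBall, dist_zero_right] at this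
    rw [norm_smul, hne, Real.norm_eq_abs, abs_of_pos hr, mul_one] at this
    simpa using this
  · have hcpos : 0 < ‖c‖ := norm_pos_iff.mpr h0
    set x : EuclideanSpace ℝ (Fin d) := c + (r * ‖c‖⁻¹) • c with hx
    have hmem : x ∈ Metric.closedBall c r := by
      rw [Metric.mem_closedBall, dist_eq_norm, hx]
      have : c + (r * ‖c‖⁻¹) • c - c = (r * ‖c‖⁻¹) • c := by abel
      rw [this, norm_smul, Real.norm_eq_abs,
        abs_of_pos (mul_pos hr (inv_pos.mpr hcpos)), mul_assoc,
        inv_mul_cancel₀ (ne_of_gt hcpos), mul_one]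
    have hxn : ‖x‖ = ‖c‖ + r := by
      have h1 : x = (1 + r * ‖c‖⁻¹) • c := by
        rw [hx, add_smul, one_smul]
      rw [h1, norm_smul, Real.norm_eq_abs,
        abs_of_pos (by positivity), add_mul, one_mul, mul_assoc,
        inv_mul_cancel₀ (ne_of_gt hcpos), mul_one]
    have := hcb hmem
    simp only [Metric.mem_closedBall, dist_zero_right] at this
    linarith [hxn ▸ this]

/-- additivity of the filtration `F_i O(n) := B_d^{(i+2)}(n)` under operadic
composition: inserting a non-`(k₂+2)`-overlapping configuration into the `i`-th disc of a
non-`(k₁+2)`-overlapping configuration yields a non-`(k₁+k₂+2)`-overlapping configuration,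
i.e. every point lies in at most `k₁+k₂+1` of the resulting discs. -/
theorem stmt_8 (d n₁ n₂ k₁ k₂ : ℕ) (hd : 1 ≤ d) (i : Fin n₁)
    (c₁ : Fin n₁ → EuclideanSpace ℝ (Fin d)) (r₁ : Fin n₁ → ℝ)
    (c₂ : Fin n₂ → EuclideanSpace ℝ (Fin d)) (r₂ : Fin n₂ → ℝ)
    (hr₁ : ∀ j, 0 < r₁ j) (hr₂ : ∀ j, 0 < r₂ j)
    (hin₁ : ∀ j, Metric.ball (c₁ j) (r₁ j) ⊆ Metric.ball 0 1)
    (hin₂ : ∀ j, Metric.ball (c₂ j) (r₂ j) ⊆ Metric.ball 0 1)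
    (hov₁ : ∀ p : EuclideanSpace ℝ (Fin d),
      Set.ncard {j | p ∈ Metric.ball (c₁ j) (r₁ j)} ≤ k₁ + 1)
    (hov₂ : ∀ p : EuclideanSpace ℝ (Fin d),
      Set.ncard {j | p ∈ Metric.ball (c₂ j) (r₂ j)} ≤ k₂ + 1) :
    ∀ p : EuclideanSpace ℝ (Fin d),
      Set.ncard {q : {j : Fin n₁ // j ≠ i} ⊕ Fin n₂ |
        p ∈ Sum.elim (fun j : {j : Fin n₁ // j ≠ i} => Metric.ball (c₁ j.1) (r₁ j.1))
          (fun j : Fin n₂ => Metric.ball (c₁ i + r₁ i • c₂ j) (r₁ i * r₂ j)) q}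
      ≤ k₁ + k₂ + 1 := by
  intro p
  set SL : Set {j : Fin n₁ // j ≠ i} := {j | p ∈ Metric.ball (c₁ j.1) (r₁ j.1)} with hSL
  set SR : Set (Fin n₂) := {j | p ∈ Metric.ball (c₁ i + r₁ i • c₂ j) (r₁ i * r₂ j)} with hSR
  have hset : {q : {j : Fin n₁ // j ≠ i} ⊕ Fin n₂ |
        p ∈ Sum.elim (fun j : {j : Fin n₁ // j ≠ i} => Metric.ball (c₁ j.1) (r₁ j.1))
          (fun j : Fin n₂ => Metric.ball (c₁ i + r₁ i • c₂ j) (r₁ i * r₂ j)) q}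
      = Sum.inl '' SL ∪ Sum.inr '' SR := by
    ext q
    cases q with
    | inl a => simp [hSL]
    | inr b => simp [hSR]
  rw [hset, Set.ncard_union_eq (by
      refine Set.disjoint_left.mpr ?_
      rintro q ⟨a, _, rfl⟩ ⟨b, _, h⟩
      exact Sum.inl_ne_inr h.symm)
    (Set.toFinite _) (Set.toFinite _),
    Set.ncard_image_of_injective _ Sum.inl_injective,
    Set.ncard_image_of_injective _ Sum.inr_injective]
  -- image of SL under Subtype.val
  have hSLcard : SL.ncard = (Subtype.val '' SL).ncard :=
    (Set.ncard_image_of_injective _ Subtype.val_injective).symm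
  rcases Set.eq_empty_or_nonempty SR with hR | ⟨j₀, hj₀⟩
  · -- no right disc contains p
    have h1 : (Subtype.val '' SL) ⊆ {j | p ∈ Metric.ball (c₁ j) (r₁ j)} := by
      rintro j ⟨a, ha, rfl⟩; exact ha
    have := Set.ncard_le_ncard h1 (Set.toFinite _)
    rw [hR]
    have := hov₁ p
    simp only [Set.ncard_empty]
    omega
  · -- p lies in the big disc i
    have hnorm : ‖c₂ j₀‖ + r₂ j₀ ≤ 1 := ball_sub_unit hd (c₂ j₀) (r₂ j₀) (hr₂ j₀) (hin₂ j₀)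
    have hpi : p ∈ Metric.ball (c₁ i) (r₁ i) := by
      have hj : dist p (c₁ i + r₁ i • c₂ j₀) < r₁ i * r₂ j₀ := hj₀
      have hd2 : dist (c₁ i + r₁ i • c₂ j₀) (c₁ i) = r₁ i * ‖c₂ j₀‖ := by
        rw [dist_eq_norm]
        simp [norm_smul, abs_of_pos (hr₁ i)]
      have htri := dist_triangle p (c₁ i + r₁ i • c₂ j₀) (c₁ i)
      have hkey : r₁ i * r₂ j₀ + r₁ i * ‖c₂ j₀‖ ≤ r₁ i := by
        have := mul_le_mul_of_nonneg_left hnorm (le_of_lt (hr₁ i))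
        nlinarith
      rw [Metric.mem_ball]
      calc dist p (c₁ i) ≤ dist p (c₁ i + r₁ i • c₂ j₀) + dist (c₁ i + r₁ i • c₂ j₀) (c₁ i) := htri
        _ < r₁ i * r₂ j₀ + r₁ i * ‖c₂ j₀‖ := by rw [hd2]; linarith
        _ ≤ r₁ i := hkey
    -- left count ≤ k₁
    have h1 : (Subtype.val '' SL) ⊆ {j | p ∈ Metric.ball (c₁ j) (r₁ j)} \ {i} := by
      rintro j ⟨a, ha, rfl⟩
      exact ⟨ha, a.2⟩
    have hLle : SL.ncard ≤ k₁ := by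
      have h2 := Set.ncard_le_ncard h1 (Set.toFinite _)
      have h3 : ({j | p ∈ Metric.ball (c₁ j) (r₁ j)} \ {i}).ncard
          = {j | p ∈ Metric.ball (c₁ j) (r₁ j)}.ncard - 1 :=
        Set.ncard_diff_singleton_of_mem (s := {j | p ∈ Metric.ball (c₁ j) (r₁ j)}) (a := i) hpi
      have h4 := hov₁ p
      have h5 : 1 ≤ {j | p ∈ Metric.ball (c₁ j) (r₁ j)}.ncard :=
        (Set.ncard_pos (Set.toFinite _)).mpr ⟨i, hpi⟩
      omega
    -- right count ≤ k₂ + 1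
    have hRle : SR.ncard ≤ k₂ + 1 := by
      set q : EuclideanSpace ℝ (Fin d) := (r₁ i)⁻¹ • (p - c₁ i) with hq
      have hsub : SR ⊆ {j | q ∈ Metric.ball (c₂ j) (r₂ j)} := by
        intro j hj
        have hj' : dist p (c₁ i + r₁ i • c₂ j) < r₁ i * r₂ j := hj
        have : dist q (c₂ j) = (r₁ i)⁻¹ * dist p (c₁ i + r₁ i • c₂ j) := by
          rw [dist_eq_norm, dist_eq_norm, hq]
          have : (r₁ i)⁻¹ • (p - c₁ i) - c₂ j = (r₁ i)⁻¹ • (p - (c₁ i + r₁ i • c₂ j)) := by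
            rw [smul_sub, smul_sub, smul_add, smul_smul,
              inv_mul_cancel₀ (ne_of_gt (hr₁ i)), one_smul]
            abel
          rw [this, norm_smul, Real.norm_eq_abs, abs_of_pos (inv_pos.mpr (hr₁ i))]
        have hlt : dist q (c₂ j) < r₂ j := by
          rw [this]
          calc (r₁ i)⁻¹ * dist p (c₁ i + r₁ i • c₂ j)
              < (r₁ i)⁻¹ * (r₁ i * r₂ j) := by
                exact mul_lt_mul_of_pos_left hj' (inv_pos.mpr (hr₁ i))
            _ = r₂ j := inv_mul_cancel_left₀ (ne_of_gt (hr₁ i)) _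
        exact hlt
      exact le_trans (Set.ncard_le_ncard hsub (Set.toFinite _)) (hov₂ q)
    omega
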